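/- The function H(x) = √(2x−x²)·log((1+√(2x−x²))/(1−√(2x−x²))) is monotone increasing and convex on the interval [0,1). -/

import Mathlib

open Real Set


lemma two_x_artanh_ineq {v : ℝ} (hv : v ∈ Set.Ico (0:ℝ) 1) :
    (1 - v^2) * (Real.log (1+v) - Real.log (1-v)) ≤ 2*v := by
  set φ : ℝ → ℝ := fun v => 2*v - (1 - v^2) * (Real.log (1+v) - Real.log (1-v)) with hφdef
  have hmono : MonotoneOn φ (Set.Ico (0:ℝ) 1) := by
    apply monotoneOn_of_hasDerivWithinAt_nonneg
      (f' := fun v => 2*v*(Real.log (1+v) - Real.log (1-v))) (convex_Ico 0 1)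
    · apply ContinuousOn.sub (continuousOn_const.mul continuousOn_id)
      apply ContinuousOn.mul (by fun_prop)
      apply ContinuousOn.sub
      · apply ContinuousOn.log (by fun_prop)
        intro v hv; simp at hv; nlinarith [hv.1, hv.2]
      · apply ContinuousOn.log (by fun_prop)
        intro v hv; simp at hv; nlinarith [hv.2]
    · intro v hv
      rw [interior_Ico] at hv
      obtain ⟨hv0, hv1⟩ := hv
      have h1 : HasDerivAt (fun v : ℝ => Real.log (1+v)) (1/(1+v)) v := by
        have := (Real.hasDerivAt_log (by linarith : (1:ℝ)+v ≠ 0)).comp v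
          ((hasDerivAt_id v).const_add 1)
        exact this.congr_deriv (by simp)
      have h2 : HasDerivAt (fun v : ℝ => Real.log (1-v)) (-(1/(1-v))) v := by
        have := (Real.hasDerivAt_log (by linarith : (1:ℝ)-v ≠ 0)).comp v
          ((hasDerivAt_id v).const_sub 1)
        exact this.congr_deriv (by simp)
      have hq : HasDerivAt (fun v : ℝ => 1 - v^2) (-(2*v)) v := by
        simpa using ((hasDerivAt_pow 2 v).const_sub 1)
      have hmain : HasDerivAt φ
          (2 - ((-(2*v)) * (Real.log (1+v) - Real.log (1-v))
            + (1 - v^2) * (1/(1+v) - -(1/(1-v))))) v := by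
        have := (((hasDerivAt_id v).const_mul 2).sub (hq.mul (h1.sub h2)))
        exact this.congr_deriv (by simp only [Pi.sub_apply]; ring)
      have : HasDerivAt φ (2*v*(Real.log (1+v) - Real.log (1-v))) v := by
        convert hmain using 1
        have hne1 : (1:ℝ)+v ≠ 0 := by linarith
        have hne2 : (1:ℝ)-v ≠ 0 := by linarith
        have : (1 - v^2) * (1/(1+v) - -(1/(1-v))) = 2 := by
          field_simp; ring
        rw [this]; ring
      exact this.hasDerivWithinAt
    · intro v hv
      rw [interior_Ico] at hv
      have hL : 0 ≤ Real.log (1+v) - Real.log (1-v) := by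
        have := Real.log_le_log (by linarith [hv.2] : (0:ℝ) < 1 - v)
          (by linarith [hv.1] : 1 - v ≤ 1 + v)
        linarith
      have := hv.1.le
      positivity
  have h0 : φ 0 ≤ φ v := hmono (by simp) hv hv.1
  have : φ 0 = 0 := by simp [hφdef]
  rw [this] at h0
  simp only [hφdef] at h0
  linarith


noncomputable def Hu (x : ℝ) : ℝ := Real.sqrt (2*x - x^2)
noncomputable def HL (x : ℝ) : ℝ := Real.log (1 + Hu x) - Real.log (1 - Hu x)
noncomputable def HD (x : ℝ) : ℝ := (1-x) * HL x / Hu x + 2/(1-x)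
noncomputable def HD2 (x : ℝ) : ℝ := 2/(Hu x)^2 + 2/(1-x)^2 - HL x/(Hu x)^3

lemma Hu_facts {x : ℝ} (hx : x ∈ Set.Ioo (0:ℝ) 1) :
    0 < Hu x ∧ Hu x < 1 ∧ (Hu x)^2 = 2*x - x^2 := by
  obtain ⟨hx0, hx1⟩ := hx
  have hp : 0 < 2*x - x^2 := by nlinarith
  have hu2 : (Hu x)^2 = 2*x - x^2 := Real.sq_sqrt hp.le
  have hu0 : 0 < Hu x := Real.sqrt_pos.2 hp
  refine ⟨hu0, ?_, hu2⟩
  nlinarith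

lemma hasDerivAt_Hu {x : ℝ} (hx : x ∈ Set.Ioo (0:ℝ) 1) :
    HasDerivAt Hu ((1-x)/Hu x) x := by
  obtain ⟨hu0, hu1, hu2⟩ := Hu_facts hx
  obtain ⟨hx0, hx1⟩ := hx
  have hp : 0 < 2*x - x^2 := by nlinarith
  have hpoly : HasDerivAt (fun y : ℝ => 2*y - y^2) (2 - 2*x) x := by
    exact (((hasDerivAt_id x).const_mul 2).sub (hasDerivAt_pow 2 x)).congr_deriv (by norm_num)
  have := (Real.hasDerivAt_sqrt hp.ne').comp x hpoly
  refine this.congr_deriv (Eq.symm ?_)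
  rw [show Real.sqrt (2*x - x^2) = Hu x from rfl]
  field_simp

lemma hasDerivAt_HL {x : ℝ} (hx : x ∈ Set.Ioo (0:ℝ) 1) :
    HasDerivAt HL (2/((1-x)*Hu x)) x := by
  obtain ⟨hu0, hu1, hu2⟩ := Hu_facts hx
  have hU := hasDerivAt_Hu hx
  obtain ⟨hx0, hx1⟩ := hx
  have h1 : HasDerivAt (fun y : ℝ => Real.log (1 + Hu y))
      (((1-x)/Hu x) / (1 + Hu x)) x := by
    have := (hU.const_add 1).log (by linarith : 1 + Hu x ≠ 0)
    simpa using this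
  have h2 : HasDerivAt (fun y : ℝ => Real.log (1 - Hu y))
      ((-((1-x)/Hu x)) / (1 - Hu x)) x := by
    have := (hU.const_sub 1).log (by linarith : 1 - Hu x ≠ 0)
    simpa using this
  have := h1.sub h2
  refine this.congr_deriv (Eq.symm ?_)
  have h1u : 1 - (Hu x)^2 = (1-x)^2 := by rw [hu2]; ring
  have hne1 : 1 + Hu x ≠ 0 := by linarith
  have hne2 : 1 - Hu x ≠ 0 := by linarith
  have hnx : (1:ℝ) - x ≠ 0 := by linarith
  field_simp
  nlinarith [hu2]

lemma hasDerivAt_Hf {x : ℝ} (hx : x ∈ Set.Ioo (0:ℝ) 1) :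
    HasDerivAt (fun y => Hu y * HL y) (HD x) x := by
  obtain ⟨hu0, hu1, hu2⟩ := Hu_facts hx
  have hU := hasDerivAt_Hu hx
  have hLd := hasDerivAt_HL hx
  obtain ⟨hx0, hx1⟩ := hx
  have := hU.mul hLd
  refine this.congr_deriv (Eq.symm ?_)
  unfold HD
  have hne2 : 1 - Hu x ≠ 0 := by linarith
  have hnu : Hu x ≠ 0 := by linarith
  have hnx : (1:ℝ) - x ≠ 0 := by linarith
  field_simp

lemma hasDerivAt_HD {x : ℝ} (hx : x ∈ Set.Ioo (0:ℝ) 1) :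
    HasDerivAt HD (HD2 x) x := by
  obtain ⟨hu0, hu1, hu2⟩ := Hu_facts hx
  have hU := hasDerivAt_Hu hx
  have hLd := hasDerivAt_HL hx
  obtain ⟨hx0, hx1⟩ := hx
  have hnu : Hu x ≠ 0 := by linarith
  have hnx : (1:ℝ) - x ≠ 0 := by linarith
  have hlin : HasDerivAt (fun y : ℝ => 1 - y) (-1) x := by
    simpa using (hasDerivAt_id x).const_sub 1
  have hA := (hlin.mul hLd).mul (hU.inv hnu)
  have hB : HasDerivAt (fun y : ℝ => 2/(1-y)) (2/(1-x)^2) x := by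
    have := (hlin.inv hnx).const_mul 2
    refine this.congr_deriv (Eq.symm ?_)
    ring
  have hAB := hA.add hB
  refine hAB.congr_deriv (Eq.symm ?_)
  have hsum : (1-x)^2 = 1 - (Hu x)^2 := by rw [hu2]; ring
  have e1 : (-1 * HL x + (1-x) * (2/((1-x)*Hu x))) * (Hu x)⁻¹
      = -HL x/Hu x + 2/(Hu x)^2 := by
    field_simp
  have e2 : ((1-x) * HL x) * (-((1-x)/Hu x) / Hu x ^ 2)
      = -((1-x)^2) * HL x/(Hu x)^3 := by
    field_simp
  have e3 : -((1-x)^2) * HL x/(Hu x)^3 = -HL x/(Hu x)^3 + HL x/Hu x := by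
    rw [hsum]; field_simp; ring
  simp only [Pi.inv_apply, Pi.mul_apply]
  rw [e1, e2, e3]
  unfold HD2; ring

lemma Hu_facts' {x : ℝ} (hx : x ∈ Set.Ico (0:ℝ) 1) :
    0 ≤ Hu x ∧ Hu x < 1 ∧ (Hu x)^2 = 2*x - x^2 := by
  obtain ⟨hx0, hx1⟩ := hx
  have hp : 0 ≤ 2*x - x^2 := by nlinarith
  have hu2 : (Hu x)^2 = 2*x - x^2 := Real.sq_sqrt hp
  have hu0 : 0 ≤ Hu x := Real.sqrt_nonneg _
  refine ⟨hu0, ?_, hu2⟩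
  nlinarith

lemma HL_nonneg {x : ℝ} (hx : x ∈ Set.Ico (0:ℝ) 1) : 0 ≤ HL x := by
  obtain ⟨hu0, hu1, hu2⟩ := Hu_facts' hx
  have := Real.log_le_log (by linarith : (0:ℝ) < 1 - Hu x)
    (by linarith : 1 - Hu x ≤ 1 + Hu x)
  unfold HL; linarith

lemma HD2_nonneg {x : ℝ} (hx : x ∈ Set.Ioo (0:ℝ) 1) : 0 ≤ HD2 x := by
  obtain ⟨hu0, hu1, hu2⟩ := Hu_facts hx
  obtain ⟨hx0, hx1⟩ := hx
  have h := two_x_artanh_ineq (v := Hu x) ⟨hu0.le, hu1⟩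
  have hs2 : (1-x)^2 = 1 - (Hu x)^2 := by rw [hu2]; ring
  have hden : 0 < 1 - (Hu x)^2 := by nlinarith
  unfold HD2
  rw [sub_nonneg, hs2]
  have h' : HL x ≤ 2*Hu x/(1-(Hu x)^2) := by
    rw [le_div_iff₀ hden]
    unfold HL
    nlinarith [h]
  calc HL x/(Hu x)^3 ≤ (2*Hu x/(1-(Hu x)^2))/(Hu x)^3 := by gcongr
    _ = 2/(Hu x)^2 + 2/(1-(Hu x)^2) := by field_simp; ring

lemma HD_nonneg {x : ℝ} (hx : x ∈ Set.Ioo (0:ℝ) 1) : 0 ≤ HD x := by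
  obtain ⟨hu0, hu1, hu2⟩ := Hu_facts hx
  have hL0 := HL_nonneg (Set.Ioo_subset_Ico_self hx)
  obtain ⟨hx0, hx1⟩ := hx
  unfold HD
  have h1 : 0 ≤ (1-x) * HL x / Hu x :=
    div_nonneg (mul_nonneg (by linarith) hL0) hu0.le
  have h2 : 0 < 2/(1-x) := div_pos two_pos (by linarith)
  linarith

/-- The function
`H(x) = √(2x-x²) log((1+√(2x-x²))/(1-√(2x-x²)))` (which is `F ∘ G⁻¹` for
`F(x) = 2x artanh x` and `G(x) = 1-√(1-x²)`) is monotone increasing and convex on `[0,1)`. -/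
theorem FGinv_monotoneOn_convexOn :
    MonotoneOn
      (fun x : ℝ => Real.sqrt (2 * x - x ^ 2) *
        Real.log ((1 + Real.sqrt (2 * x - x ^ 2)) / (1 - Real.sqrt (2 * x - x ^ 2))))
      (Set.Ico (0 : ℝ) 1) ∧
    ConvexOn ℝ (Set.Ico (0 : ℝ) 1)
      (fun x : ℝ => Real.sqrt (2 * x - x ^ 2) *
        Real.log ((1 + Real.sqrt (2 * x - x ^ 2)) / (1 - Real.sqrt (2 * x - x ^ 2)))) := by
  set f : ℝ → ℝ := fun x : ℝ => Real.sqrt (2 * x - x ^ 2) *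
        Real.log ((1 + Real.sqrt (2 * x - x ^ 2)) / (1 - Real.sqrt (2 * x - x ^ 2))) with hfdef
  have heq : ∀ y ∈ Set.Ico (0:ℝ) 1, f y = Hu y * HL y := by
    intro y hy
    obtain ⟨hu0, hu1, hu2⟩ := Hu_facts' hy
    have hne1 : 1 + Hu y ≠ 0 := by positivity
    have hne2 : 1 - Hu y ≠ 0 := by intro h; linarith
    show Real.sqrt (2 * y - y ^ 2) *
        Real.log ((1 + Real.sqrt (2 * y - y ^ 2)) / (1 - Real.sqrt (2 * y - y ^ 2)))
        = Hu y * HL y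
    unfold Hu at hne1 hne2
    rw [Real.log_div hne1 hne2]
    rfl
  have hcont : ContinuousOn f (Set.Ico (0:ℝ) 1) := by
    have hcs : Continuous (fun x : ℝ => Real.sqrt (2 * x - x ^ 2)) := by
      fun_prop
    apply hcs.continuousOn.mul
    apply ContinuousOn.log
    · apply ContinuousOn.div (by fun_prop) (by fun_prop)
      intro y hy
      obtain ⟨hu0, hu1, hu2⟩ := Hu_facts' hy
      intro h
      unfold Hu at hu1
      rw [sub_eq_zero] at h
      rw [← h] at hu1
      simp at hu1
    · intro y hy
      obtain ⟨hu0, hu1, hu2⟩ := Hu_facts' hy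
      unfold Hu at hu0 hu1
      apply div_ne_zero
      · positivity
      · intro h; rw [sub_eq_zero] at h; rw [← h] at hu1; simp at hu1
  have hderiv : ∀ x ∈ interior (Set.Ico (0:ℝ) 1),
      HasDerivWithinAt f (HD x) (interior (Set.Ico (0:ℝ) 1)) x := by
    intro x hx
    rw [interior_Ico] at hx ⊢
    exact ((hasDerivAt_Hf hx).hasDerivWithinAt).congr
      (fun y hy => heq y (Set.Ioo_subset_Ico_self hy))
      (heq x (Set.Ioo_subset_Ico_self hx))
  have hderiv2 : ∀ x ∈ interior (Set.Ico (0:ℝ) 1),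
      HasDerivWithinAt HD (HD2 x) (interior (Set.Ico (0:ℝ) 1)) x := by
    intro x hx
    rw [interior_Ico] at hx ⊢
    exact (hasDerivAt_HD hx).hasDerivWithinAt
  constructor
  · apply monotoneOn_of_hasDerivWithinAt_nonneg (convex_Ico 0 1) hcont hderiv
    intro x hx
    rw [interior_Ico] at hx
    exact HD_nonneg hx
  · apply convexOn_of_hasDerivWithinAt2_nonneg (convex_Ico 0 1) hcont hderiv hderiv2
    intro x hx
    rw [interior_Ico] at hx
    exact HD2_nonneg hx
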